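/- Let Ω be a nonempty finite type and let E = ⟨𝓔, mod⟩ be an epistemic space over Ω. If E satisfies (ZC), then there exists a full meet contraction operator for E. -/
import Mathlib


open Set

/-- `minSet r S` is the set of `r`-minimal elements of `S`:
`min(S, r) = {ω ∈ S : r ω ω' for all ω' ∈ S}`. -/
def minSet {Ω : Type*} (r : Ω → Ω → Prop) (S : Set Ω) : Set Ω :=
  {ω ∈ S | ∀ ω' ∈ S, r ω ω'}

/-- A linear order as a relation: total, antisymmetric and transitive. -/
def IsLinRel {Ω : Type*} (r : Ω → Ω → Prop) : Prop :=
  (∀ a b, r a b ∨ r b a) ∧ (∀ a b, r a b → r b a → a = b) ∧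
    (∀ a b c, r a b → r b c → r a c)

/-- AGM contraction operator for the epistemic space `⟨E, md⟩` (postulates C1–C7,
formulated on model sets). -/
def IsContraction {Ω E : Type*} (md : E → Set Ω) (c : E → Set Ω → E) : Prop :=
  ∀ (Ψ : E) (A B : Set Ω),
    md Ψ ⊆ md (c Ψ A) ∧
    (¬ md Ψ ⊆ A → md (c Ψ A) ⊆ md Ψ) ∧
    (A ≠ Set.univ → ¬ md (c Ψ A) ⊆ A) ∧
    md (c Ψ A) ∩ A ⊆ md Ψ ∧
    md (c Ψ (A ∩ B)) ⊆ md (c Ψ A) ∪ md (c Ψ B) ∧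
    (¬ md (c Ψ (A ∩ B)) ⊆ B → md (c Ψ B) ⊆ md (c Ψ (A ∩ B)))

/-- AGM revision operator for the epistemic space `⟨E, md⟩` (postulates R1–R6,
formulated on model sets). -/
def IsRevision {Ω E : Type*} (md : E → Set Ω) (s : E → Set Ω → E) : Prop :=
  ∀ (Ψ : E) (A B : Set Ω),
    md (s Ψ A) ⊆ A ∧
    (md Ψ ∩ A ≠ ∅ → md (s Ψ A) = md Ψ ∩ A) ∧
    (A ≠ ∅ → md (s Ψ A) ≠ ∅) ∧
    md (s Ψ A) ∩ B ⊆ md (s Ψ (A ∩ B)) ∧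
    (md (s Ψ A) ∩ B ≠ ∅ → md (s Ψ (A ∩ B)) ⊆ md (s Ψ A) ∩ B)

/-- Postulate (ZC). -/
def ZC {Ω E : Type*} (md : E → Set Ω) : Prop :=
  ∀ (Ψ : E) (M : Set Ω), md Ψ ⊆ M → ∃ Ψ' : E, md Ψ' = M

/-- Postulate (ZR1). -/
def ZR1 {Ω E : Type*} (md : E → Set Ω) : Prop :=
  ∀ ω : Ω, ∃ Ψ : E, md Ψ = {ω}

/-- Postulate (ZR2). -/
def ZR2 {Ω E : Type*} (md : E → Set Ω) : Prop :=
  ∀ (Ψ : E) (M : Set Ω), M ⊆ md Ψ → ∃ Ψ' : E, md Ψ' = M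

/-- Postulate (Unbiased). -/
def Unbiased {Ω E : Type*} (md : E → Set Ω) : Prop :=
  ∀ M : Set Ω, ∃ Ψ : E, md Ψ = M

/-- Maxichoice contraction operator. -/
def IsMaxichoiceContraction {Ω E : Type*} (md : E → Set Ω) (c : E → Set Ω → E) : Prop :=
  IsContraction md c ∧
    ∀ Ψ : E, ∃ r : Ω → Ω → Prop, IsLinRel r ∧ ∀ A : Set Ω,
      (¬ md Ψ ⊆ A → md (c Ψ A) = md Ψ) ∧
      (md Ψ ⊆ A → md (c Ψ A) = md Ψ ∪ minSet r Aᶜ)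

/-- Linear contraction operator: a maxichoice contraction operator based on one
single linear order for all epistemic states. -/
def IsLinearContraction {Ω E : Type*} (md : E → Set Ω) (c : E → Set Ω → E) : Prop :=
  IsContraction md c ∧
    ∃ r : Ω → Ω → Prop, IsLinRel r ∧ ∀ (Ψ : E) (A : Set Ω),
      (¬ md Ψ ⊆ A → md (c Ψ A) = md Ψ) ∧
      (md Ψ ⊆ A → md (c Ψ A) = md Ψ ∪ minSet r Aᶜ)

/-- Full meet contraction operator. -/
def IsFullMeetContraction {Ω E : Type*} (md : E → Set Ω) (c : E → Set Ω → E) : Prop :=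
  IsContraction md c ∧
    ∀ (Ψ : E) (A : Set Ω),
      (¬ md Ψ ⊆ A → md (c Ψ A) = md Ψ) ∧
      (md Ψ ⊆ A → md (c Ψ A) = md Ψ ∪ Aᶜ)

/-- Maxichoice revision operator. -/
def IsMaxichoiceRevision {Ω E : Type*} (md : E → Set Ω) (s : E → Set Ω → E) : Prop :=
  IsRevision md s ∧
    ∀ Ψ : E, ∃ r : Ω → Ω → Prop, IsLinRel r ∧ ∀ A : Set Ω,
      (md Ψ ∩ A ≠ ∅ → md (s Ψ A) = md Ψ ∩ A) ∧
      (md Ψ ∩ A = ∅ → md (s Ψ A) = minSet r A)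

/-- Linear revision operator: a maxichoice revision operator based on one single
linear order for all epistemic states. -/
def IsLinearRevision {Ω E : Type*} (md : E → Set Ω) (s : E → Set Ω → E) : Prop :=
  IsRevision md s ∧
    ∃ r : Ω → Ω → Prop, IsLinRel r ∧ ∀ (Ψ : E) (A : Set Ω),
      (md Ψ ∩ A ≠ ∅ → md (s Ψ A) = md Ψ ∩ A) ∧
      (md Ψ ∩ A = ∅ → md (s Ψ A) = minSet r A)

/-- Full meet revision operator. -/
def IsFullMeetRevision {Ω E : Type*} (md : E → Set Ω) (s : E → Set Ω → E) : Prop :=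
  IsRevision md s ∧
    ∀ (Ψ : E) (A : Set Ω),
      (md Ψ ∩ A ≠ ∅ → md (s Ψ A) = md Ψ ∩ A) ∧
      (md Ψ ∩ A = ∅ → md (s Ψ A) = A)


/-- If `⟨E, md⟩` satisfies (ZC), then there exists a full meet
contraction operator for `⟨E, md⟩`. -/
theorem exists_fullMeetContraction_of_ZC {Ω E : Type*} [Fintype Ω] [Nonempty Ω] [Nonempty E]
    (md : E → Set Ω)
    (hZC : ZC md) :
    ∃ c : E → Set Ω → E, IsFullMeetContraction md c := by
  classical
  set c : E → Set Ω → E := fun Ψ A =>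
    if h : md Ψ ⊆ A then Classical.choose (hZC Ψ (md Ψ ∪ Aᶜ) subset_union_left) else Ψ
    with hc
  have hpos : ∀ Ψ A, md Ψ ⊆ A → md (c Ψ A) = md Ψ ∪ Aᶜ := by
    intro Ψ A h
    simp only [hc, dif_pos h]
    exact Classical.choose_spec (hZC Ψ (md Ψ ∪ Aᶜ) subset_union_left)
  have hneg : ∀ Ψ A, ¬ md Ψ ⊆ A → md (c Ψ A) = md Ψ := by
    intro Ψ A h; simp only [hc, dif_neg h]
  have hC1 : ∀ Ψ A, md Ψ ⊆ md (c Ψ A) := by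
    intro Ψ A
    by_cases h : md Ψ ⊆ A
    · rw [hpos Ψ A h]; exact subset_union_left
    · rw [hneg Ψ A h]
  refine ⟨c, ?_, fun Ψ A => ⟨hneg Ψ A, hpos Ψ A⟩⟩
  intro Ψ A B
  refine ⟨hC1 Ψ A, ?_, ?_, ?_, ?_, ?_⟩
  · intro h; rw [hneg Ψ A h]
  · intro hA
    by_cases h : md Ψ ⊆ A
    · rw [hpos Ψ A h]
      obtain ⟨x, hx⟩ : Aᶜ.Nonempty := by
        rw [Set.nonempty_compl]; exact hA
      intro hsub
      exact hx (hsub (Or.inr hx))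
    · intro hsub; exact h (fun x hx => hsub (hC1 Ψ A hx))
  · by_cases h : md Ψ ⊆ A
    · rw [hpos Ψ A h]
      rintro x ⟨hx1 | hx1, hx2⟩
      · exact hx1
      · exact absurd hx2 hx1
    · rw [hneg Ψ A h]; exact Set.inter_subset_left
  · by_cases h : md Ψ ⊆ A ∩ B
    · rw [hpos Ψ (A ∩ B) h]
      have hA : md Ψ ⊆ A := h.trans Set.inter_subset_left
      have hB : md Ψ ⊆ B := h.trans Set.inter_subset_right
      rw [hpos Ψ A hA, hpos Ψ B hB, Set.compl_inter]
      rintro x (hx | hx | hx)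
      · exact Or.inl (Or.inl hx)
      · exact Or.inl (Or.inr hx)
      · exact Or.inr (Or.inr hx)
    · rw [hneg Ψ (A ∩ B) h]
      exact fun x hx => Or.inl (hC1 Ψ A hx)
  · intro hAB
    by_cases h : md Ψ ⊆ A ∩ B
    · have hB : md Ψ ⊆ B := h.trans Set.inter_subset_right
      rw [hpos Ψ (A ∩ B) h, hpos Ψ B hB, Set.compl_inter]
      rintro x (hx | hx)
      · exact Or.inl hx
      · exact Or.inr (Or.inr hx)
    · rw [hneg Ψ (A ∩ B) h] at hAB ⊢
      by_cases hB : md Ψ ⊆ B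
      · exact absurd hB hAB
      · rw [hneg Ψ B hB]
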